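/- Suppose Assumption (*) holds for the two-sided cell c. Then for every d ∈ D the family {C_d T_u + H_{<c} : u ∈ U_d} is A-linearly independent in the quotient H / H_{<c}. -/

import Mathlib

open scoped Classical TensorProduct

noncomputable section

namespace KL

variable (Γ : Type) [AddCommGroup Γ] [LinearOrder Γ] [IsOrderedAddMonoid Γ]

/-- The group ring `A = ℤ[Γ]`. -/
abbrev A := AddMonoidAlgebra ℤ Γ

variable {Γ}

/-- The basis element `q^γ` of `A`. -/
def qe (γ : Γ) : A Γ := AddMonoidAlgebra.single γ 1

/-- `A_{<0}`: the ℤ-span of the `q^γ` with `γ < 0`, i.e. elements supported in negative degrees. -/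
def Alt0 (Γ : Type) [AddCommGroup Γ] [LinearOrder Γ] [IsOrderedAddMonoid Γ] : Set (A Γ) :=
  {a : A Γ | ∀ γ ∈ a.coeff.support, γ < 0}

/-- The degree of an element of `A` (`⊥` for `0`). -/
def adeg (a : A Γ) : WithBot Γ := a.coeff.support.max

variable {B W : Type} [Group W] {M : CoxeterMatrix B}
variable {H : Type} [Ring H]

/-- Bundled data of a Coxeter system `(W,S)` together with a positive weight function `L`,
its Hecke algebra `H` over `A = ℤ[Γ]` with standard basis `T`, the bar involution, and the
Kazhdan-Lusztig basis `C`. -/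
structure KLData (M : CoxeterMatrix B) (W : Type) [Group W] (Γ : Type)
    [AddCommGroup Γ] [LinearOrder Γ] [IsOrderedAddMonoid Γ] (H : Type) [Ring H] [Algebra (A Γ) H] where
  /-- the Coxeter system -/
  cs : CoxeterSystem M W
  /-- the weight function -/
  L : W → Γ
  L_add : ∀ w w' : W, cs.length (w * w') = cs.length w + cs.length w' →
    L (w * w') = L w + L w'
  L_pos : ∀ w : W, w ≠ 1 → 0 < L w
  /-- the standard basis `T_w` of the Hecke algebra -/
  bT : Module.Basis W (A Γ) H
  T_mul : ∀ w w' : W, cs.length (w * w') = cs.length w + cs.length w' →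
    bT w * bT w' = bT (w * w')
  T_quad : ∀ i : B,
    (bT (cs.simple i) + algebraMap (A Γ) H (qe (-(L (cs.simple i))))) *
      (bT (cs.simple i) - algebraMap (A Γ) H (qe (L (cs.simple i)))) = 0
  /-- the bar involution -/
  bar : H →+* H
  bar_bar : ∀ h : H, bar (bar h) = h
  bar_q : ∀ γ : Γ, bar (algebraMap (A Γ) H (qe γ)) = algebraMap (A Γ) H (qe (-γ))
  bar_T : ∀ w : W, bar (bT w) * bT w⁻¹ = 1
  bar_T' : ∀ w : W, bT w⁻¹ * bar (bT w) = 1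
  /-- the Kazhdan-Lusztig basis `C_w` -/
  bC : Module.Basis W (A Γ) H
  bar_C : ∀ w : W, bar (bC w) = bC w
  C_mod : ∀ w v : W, bT.repr (bC w - bT w) v ∈ Alt0 Γ

namespace KLData

variable [Algebra (A Γ) H] (d : KLData M W Γ H)

/-- `T_w` -/
def T (w : W) : H := d.bT w

/-- `C_w` -/
def C (w : W) : H := d.bC w

/-- `H_{<0} = ⊕_w A_{<0} T_w`. -/
def Hlt0 : Set H := {h : H | ∀ w : W, d.bT.repr h w ∈ Alt0 Γ}

/-- The structure constants `h_{x,y,z}` of the KL basis. -/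
def hk (x y z : W) : A Γ := d.bC.repr (d.C x * d.C y) z

/-- One step of the preorder `≤_L` : `x` appears in `C_z C_y` for some `z`. -/
def leLstep (x y : W) : Prop := ∃ z : W, d.bC.repr (d.C z * d.C y) x ≠ 0

/-- The preorder `≤_L`. -/
def leL : W → W → Prop := Relation.ReflTransGen d.leLstep

/-- `x ~_L y` -/
def simL (x y : W) : Prop := d.leL x y ∧ d.leL y x

/-- `x ≤_R y` -/
def leR (x y : W) : Prop := d.leL x⁻¹ y⁻¹

/-- `x ~_R y` -/
def simR (x y : W) : Prop := d.simL x⁻¹ y⁻¹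

/-- The preorder `≤_LR`, generated by `≤_L` and `≤_R`. -/
def leLR : W → W → Prop :=
  Relation.ReflTransGen (fun x y => d.leLstep x y ∨ d.leLstep x⁻¹ y⁻¹)

/-- `x ~_LR y` -/
def simLR (x y : W) : Prop := d.leLR x y ∧ d.leLR y x

/-- left cells -/
def IsLeftCell (Θ : Set W) : Prop := ∃ x : W, Θ = {y | d.simL x y}

/-- right cells -/
def IsRightCell (Φ : Set W) : Prop := ∃ x : W, Φ = {y | d.simR x y}

/-- two-sided cells -/
def IsTwoSidedCell (c : Set W) : Prop := ∃ x : W, c = {y | d.simLR x y}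

/-- `z < c` for a two-sided cell `c`. -/
def ltc (c : Set W) (z : W) : Prop := z ∉ c ∧ ∀ w ∈ c, d.leLR z w

/-- `z ≤ c` for a two-sided cell `c`. -/
def lec (c : Set W) (z : W) : Prop := ∀ w ∈ c, d.leLR z w

/-- The ideal `H_{<c}`, spanned by the `C_z` with `z < c`. -/
def Hltc (c : Set W) : Submodule (A Γ) H :=
  Submodule.span (A Γ) (d.C '' {z : W | d.ltc c z})

/-- Bruhat order on `W`. -/
def bruhatLE : W → W → Prop :=
  Relation.ReflTransGen (fun x y => ∃ t : W, d.cs.IsReflection t ∧ y = x * t ∧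
    d.cs.length x < d.cs.length y)

/-- Strict Bruhat order on `W`. -/
def bruhatLT (x y : W) : Prop := d.bruhatLE x y ∧ x ≠ y

/-- Duflo order: `x ≤_D y` iff `l(x⁻¹y) = l(y) - l(x)`. -/
def dufloLE (x y : W) : Prop :=
  d.cs.length x + d.cs.length (x⁻¹ * y) = d.cs.length y

/-- The `A`-linear anti-automorphism `♭` of `H` with `T_w ↦ T_{w⁻¹}`. -/
def flat : H →ₗ[A Γ] H := d.bT.constr ℕ (fun w => d.bT w⁻¹)

/-- `P_{e,z}` : the coefficient of `T_e` in `C_z`. -/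
def Pel (z : W) : A Γ := d.bT.repr (d.C z) 1

/-- `Δ(z)`, defined by `P_{e,z} = n_z q^{-Δ(z)} + lower degree terms`. -/
def Del (z : W) : Γ := -(WithBot.unbotD 0 (d.Pel z).coeff.support.max)

/-- `n_z`, defined by `P_{e,z} = n_z q^{-Δ(z)} + lower degree terms`. -/
def nz (z : W) : ℤ := (d.Pel z).coeff (-(d.Del z))

/-- `af : W → Γ` is Lusztig's `a`-function iff for each `z`, `af z` is the (attained)
supremum of the degrees of the `h_{x,y,z}`. -/
def IsAFunction (af : W → Γ) : Prop :=
  ∀ z : W, (∀ x y : W, adeg (d.hk x y z) ≤ (af z : WithBot Γ)) ∧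
    (∃ x y : W, adeg (d.hk x y z) = (af z : WithBot Γ))

/-- `γ_{x,y,z}` : the coefficient of `q^{a(z⁻¹)}` in `h_{x,y,z⁻¹}`. -/
def gam (af : W → Γ) (x y z : W) : ℤ := (d.hk x y z⁻¹).coeff (af z⁻¹)

/-- The set `𝒟 = {z | a(z) = Δ(z)}`. -/
def Dset (af : W → Γ) : Set W := {z : W | af z = d.Del z}

end KLData

variable [Algebra (A Γ) H]

/-- Assumption (*): a two-sided cell `c` equipped with subsets `D ⊆ c` and
`B_d, U_d ⊆ W` (`d ∈ D`) satisfying conditions (ia)-(iv). -/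
structure CellDecomp (d : KLData M W Γ H) (c : Set W) where
  isCell : d.IsTwoSidedCell c
  D : Set W
  Bd : W → Set W
  Ud : W → Set W
  D_sub : D ⊆ c
  -- (ia) : c = c⁻¹ = ⊔_{d ∈ D} B_d d U_d (disjoint union)
  c_inv : ∀ w : W, w ∈ c ↔ w⁻¹ ∈ c
  c_eq : c = ⋃ d0 ∈ D, {w : W | ∃ b ∈ Bd d0, ∃ u ∈ Ud d0, w = b * d0 * u}
  disj : ∀ d1 ∈ D, ∀ d2 ∈ D, d1 ≠ d2 →
    Disjoint {w : W | ∃ b ∈ Bd d1, ∃ u ∈ Ud d1, w = b * d1 * u}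
             {w : W | ∃ b ∈ Bd d2, ∃ u ∈ Ud d2, w = b * d2 * u}
  -- (ib)
  len_add : ∀ d0 ∈ D, ∀ b ∈ Bd d0, ∀ u ∈ Ud d0,
    d.cs.length (b * d0 * u) = d.cs.length b + d.cs.length d0 + d.cs.length u
  -- (ic)
  one_mem_B : ∀ d0 ∈ D, (1 : W) ∈ Bd d0
  one_mem_U : ∀ d0 ∈ D, (1 : W) ∈ Ud d0
  Binv_sub_U : ∀ d0 ∈ D, ∀ b ∈ Bd d0, b⁻¹ ∈ Ud d0
  -- (id)
  not_mem_c : ∀ d0 ∈ D, ∀ w : W, w ∉ Ud d0 →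
    (∀ i : B, d.bruhatLE (d.cs.simple i) d0 →
      d.cs.length (d.cs.simple i * w) = d.cs.length w + 1) → d0 * w ∉ c
  -- (iia) : each d ∈ D is an involution in a finite parabolic subgroup
  d_inv : ∀ d0 ∈ D, d0 * d0 = 1 ∧ d0 ≠ 1
  d_parabolic : ∀ d0 ∈ D, ∃ I : Set B,
    (Subgroup.closure (d.cs.simple '' I) : Set W).Finite ∧
    d0 ∈ Subgroup.closure (d.cs.simple '' I)
  s_len : ∀ d0 ∈ D, ∀ i : B, d.bruhatLE (d.cs.simple i) d0 →
    ∀ u ∈ Ud d0, d.cs.length (d.cs.simple i * u) = d.cs.length u + 1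
  -- (iib)
  TsC : ∀ d0 ∈ D, ∀ i : B, d.bruhatLE (d.cs.simple i) d0 →
    ∃ a : A Γ, d.T (d.cs.simple i) * d.C d0 - a • d.C d0 ∈ d.Hltc c
  -- (iic)
  h_ne : ∀ d0 ∈ D, d.hk d0 d0 d0 ≠ 0
  -- (iii)
  dU_rightCell : ∀ d0 ∈ D, d.IsRightCell {w : W | ∃ u ∈ Ud d0, w = d0 * u}
  -- (iv)
  TCT : ∀ d0 ∈ D, ∀ b ∈ Bd d0, ∀ u ∈ Ud d0,
    ∃ h0 ∈ d.Hlt0, ∃ h1 ∈ d.Hltc c,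
      d.T b * d.C d0 * d.T u - d.T (b * d0 * u) = h0 + h1

namespace CellDecomp

variable {d : KLData M W Γ H} {c : Set W} (cd : CellDecomp d c)

/-- `F` is the element `F_w` : `F = T_w + Σ_{y ∈ U_d, y < w} p_{y,w} T_y` with
`p_{y,w} ∈ A_{<0}`, and `C_d F ≡ C_{dw} mod H_{<c}`. -/
def IsF (d0 w : W) (F : H) : Prop :=
  (d.bT.repr F w = 1 ∧
    ∀ y : W, y ≠ w → d.bT.repr F y ≠ 0 →
      y ∈ cd.Ud d0 ∧ d.bruhatLT y w ∧ d.bT.repr F y ∈ Alt0 Γ) ∧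
  d.C d0 * F - d.C (d0 * w) ∈ d.Hltc c

/-- The right cell `Φ_{b,d} = b d U_d`. -/
def Phi (b d0 : W) : Set W := {x : W | ∃ u ∈ cd.Ud d0, x = b * d0 * u}

/-- The left cell `Θ_{b,d} = Φ_{b,d}⁻¹`. -/
def Theta (b d0 : W) : Set W := {x : W | ∃ u ∈ cd.Ud d0, x = u⁻¹ * d0 * b⁻¹}

end CellDecomp

/-- The Coxeter matrix of affine type C̃2: generators `s0 s1 s2`,
`(s0 s1)⁴ = (s1 s2)⁴ = (s0 s2)² = 1`. -/
def Ct2 : CoxeterMatrix (Fin 3) where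
  M := !![1, 4, 2; 4, 1, 4; 2, 4, 1]
  isSymm := by decide
  diagonal := by decide
  off_diagonal := by intro i j h; fin_cases i <;> fin_cases j <;> simp_all

/-- The Coxeter matrix of affine type G̃2: generators `s0 s1 s2`,
`(s0 s1)³ = (s1 s2)⁶ = (s0 s2)² = 1`. -/
def Gt2 : CoxeterMatrix (Fin 3) where
  M := !![1, 3, 2; 3, 1, 6; 2, 6, 1]
  isSymm := by decide
  diagonal := by decide
  off_diagonal := by intro i j h; fin_cases i <;> fin_cases j <;> simp_all

/-- `ξ_γ = q^γ - q^{-γ}`. -/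
def xi (γ : Γ) : A Γ := qe γ - qe (-γ)

/-- `η_γ = q^γ + q^{-γ}`. -/
def eta (γ : Γ) : A Γ := qe γ + qe (-γ)


namespace KLData

variable [Algebra (A Γ) H] (d : KLData M W Γ H)

/-- The free `A ⊗_ℤ A`-module with basis `{E_w : w ∈ c}`. -/
abbrev Emod (Γ : Type) [AddCommGroup Γ] [LinearOrder Γ] [IsOrderedAddMonoid Γ] {W : Type} (c : Set W) :=
  ↥c →₀ (A Γ ⊗[ℤ] A Γ)

/-- `C_x ⬝ E_w = Σ_{z ∈ c} (h_{x,w,z} ⊗ 1) E_z`. -/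
def lactB (c : Set W) (x : W) (w : ↥c) : Emod Γ c :=
  Finsupp.mapRange (fun a => a ⊗ₜ[ℤ] (1 : A Γ)) (by simp)
    ((d.bC.repr (d.C x * d.C (w : W))).subtypeDomain (· ∈ c))

/-- The left action of `C_x` on `E`, extended `(A ⊗ A)`-linearly from the basis. -/
def lact (c : Set W) (x : W) (v : Emod Γ c) : Emod Γ c :=
  v.sum fun w t => t • d.lactB c x w

/-- `E_w ⬝ C_y = Σ_{z ∈ c} (1 ⊗ h_{w,y,z}) E_z`. -/
def ractB (c : Set W) (y : W) (w : ↥c) : Emod Γ c :=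
  Finsupp.mapRange (fun a => (1 : A Γ) ⊗ₜ[ℤ] a) (by simp)
    ((d.bC.repr (d.C (w : W) * d.C y)).subtypeDomain (· ∈ c))

/-- The right action of `C_y` on `E`, extended `(A ⊗ A)`-linearly from the basis. -/
def ract (c : Set W) (y : W) (v : Emod Γ c) : Emod Γ c :=
  v.sum fun w t => t • d.ractB c y w

end KLData

end KL

open KL

namespace KLHelper

lemma mul_coeff_eq_zero {Γ : Type} [AddCommGroup Γ] [LinearOrder Γ] [IsOrderedAddMonoid Γ]
    (a p : A Γ) (δ μ : Γ) (ha : ∀ γ ∈ a.coeff.support, γ ≤ δ)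
    (hp : ∀ γ ∈ p.coeff.support, γ < 0) (hμ : δ ≤ μ) : (a * p).coeff μ = 0 := by
  by_contra h
  have hmem : μ ∈ (a * p).coeff.support := Finsupp.mem_support_iff.2 h
  have h2 := AddMonoidAlgebra.support_coeff_mul_subset a p hmem
  obtain ⟨α, hα, β, hβ, hs⟩ := Finset.mem_add.1 h2
  have h3 : α + β < α + 0 := add_lt_add_right (hp β hβ) α
  rw [add_zero] at h3
  have h4 : α + β < μ := lt_of_lt_of_le h3 (le_trans (ha α hα) hμ)
  rw [hs] at h4
  exact lt_irrefl _ h4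

lemma bT_one {B W : Type} [Group W] {M : CoxeterMatrix B} {Γ : Type}
    [AddCommGroup Γ] [LinearOrder Γ] [IsOrderedAddMonoid Γ] {H : Type} [Ring H] [Algebra (A Γ) H]
    (d : KLData M W Γ H) : d.bT 1 = 1 := by
  have key : LinearMap.mulLeft (A Γ) (d.bT 1) = LinearMap.id := by
    apply d.bT.ext
    intro w
    rw [LinearMap.mulLeft_apply, LinearMap.id_apply,
      d.T_mul 1 w (by rw [one_mul, d.cs.length_one, zero_add]), one_mul]
  have h1 := congrArg (fun f : H →ₗ[A Γ] H => f (1 : H)) key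
  simpa using h1

end KLHelper

/-- under Assumption (*), the family `{C_d T_u + H_{<c} : u ∈ U_d}`
is `A`-linearly independent in `H / H_{<c}`. -/
theorem statement_2 {B W : Type} [Group W] {M : CoxeterMatrix B} {Γ : Type}
    [AddCommGroup Γ] [LinearOrder Γ] [IsOrderedAddMonoid Γ] {H : Type} [Ring H] [Algebra (A Γ) H]
    (d : KLData M W Γ H) (c : Set W) (cd : CellDecomp d c)
    (d0 : W) (hd0 : d0 ∈ cd.D) :
    LinearIndependent (A Γ) (fun u : cd.Ud d0 =>
      (Submodule.Quotient.mk (d.C d0 * d.T (u : W)) : H ⧸ d.Hltc c)) := by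
  classical
  rw [linearIndependent_iff]
  intro l hl
  by_contra hlne
  have TCT := fun u : cd.Ud d0 => cd.TCT d0 hd0 1 (cd.one_mem_B d0 hd0) (u : W) u.2
  choose h0 hh0 h1 hh1 heq using TCT
  have T1 : d.T (1 : W) = 1 := KLHelper.bT_one d
  have key : ∀ u : cd.Ud d0,
      d.C d0 * d.T (u : W) = d.T (d0 * (u : W)) + h0 u + h1 u := by
    intro u
    have h := heq u
    rw [T1, one_mul, one_mul] at h
    have := eq_add_of_sub_eq h
    rw [this]; abel
  set x : H := ∑ u ∈ l.support, l u • (d.C d0 * d.T (u : W)) with hxdef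
  have hx0 : Submodule.Quotient.mk x = (0 : H ⧸ d.Hltc c) := by
    rw [← hl, Finsupp.linearCombination_apply, Finsupp.sum, hxdef]
    simp only [← Submodule.mkQ_apply, map_sum, map_smul]
  have hx : x ∈ d.Hltc c := (Submodule.Quotient.mk_eq_zero _).1 hx0
  set y : H := ∑ u ∈ l.support, l u • (d.T (d0 * (u : W)) + h0 u) with hydef
  have hxy : x = y + ∑ u ∈ l.support, l u • h1 u := by
    rw [hxdef, hydef, ← Finset.sum_add_distrib]
    refine Finset.sum_congr rfl fun u _ => ?_
    rw [← smul_add, key u]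
  have hy : y ∈ d.Hltc c := by
    have h1mem : (∑ u ∈ l.support, l u • h1 u) ∈ d.Hltc c :=
      Submodule.sum_mem _ fun u _ => Submodule.smul_mem _ _ (hh1 u)
    have hyx : y = x - ∑ u ∈ l.support, l u • h1 u := by rw [hxy]; abel
    rw [hyx]; exact Submodule.sub_mem _ hx h1mem
  set b := d.bC.repr y with hbdef
  have hbsupp : ∀ z ∈ b.support, d.ltc c z := by
    have hmem : y ∈ Submodule.span (A Γ) (⇑d.bC '' {z : W | d.ltc c z}) := by
      have hCeq : d.C = ⇑d.bC := rfl
      rw [← hCeq]; exact hy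
    intro z hz
    exact d.bC.mem_span_image.1 hmem hz
  have hf : ∀ w : W, d.bT.repr y w =
      ∑ u ∈ l.support, l u * ((if (d0 * (u : W)) = w then 1 else 0)
        + d.bT.repr (h0 u) w) := by
    intro w
    rw [hydef]
    rw [map_sum, Finset.sum_apply']
    refine Finset.sum_congr rfl fun u _ => ?_
    rw [map_smul, Finsupp.smul_apply, smul_eq_mul]
    congr 1
    rw [map_add, Finsupp.add_apply]
    congr 1
    rw [show d.T (d0 * (u : W)) = d.bT (d0 * (u : W)) from rfl, d.bT.repr_self,
      Finsupp.single_apply]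
  have hg : ∀ w : W, d.bT.repr y w =
      b w + ∑ z ∈ b.support, b z * d.bT.repr (d.bC z - d.bT z) w := by
    intro w
    conv_lhs => rw [← d.bC.linearCombination_repr y]
    rw [Finsupp.linearCombination_apply, Finsupp.sum, map_sum, Finset.sum_apply']
    rw [Finset.sum_congr rfl (fun z (_ : z ∈ b.support) =>
      (by
        rw [map_smul, Finsupp.smul_apply, smul_eq_mul]
        conv_lhs => rw [show d.bC z = d.bT z + (d.bC z - d.bT z) by abel]
        rw [map_add, Finsupp.add_apply, mul_add, d.bT.repr_self,
          Finsupp.single_apply, mul_ite, mul_one, mul_zero]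
        : d.bT.repr ((d.bC.repr y) z • d.bC z) w
          = (if z = w then b z else 0) + b z * d.bT.repr (d.bC z - d.bT z) w))]
    rw [Finset.sum_add_distrib, Finset.sum_ite_eq' b.support w (fun z => b z)]
    congr 1
    by_cases hw : w ∈ b.support
    · rw [if_pos hw]
    · rw [if_neg hw, Finsupp.notMem_support_iff.1 hw]
  set E : Finset Γ := (l.support.biUnion fun u => (l u).coeff.support)
      ∪ (b.support.biUnion fun z => (b z).coeff.support) with hEdef
  have hEne : E.Nonempty := by
    obtain ⟨u, hu⟩ : ∃ u, l u ≠ 0 := by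
      by_contra h; push_neg at h; exact hlne (Finsupp.ext h)
    obtain ⟨γ, hγ⟩ : ((l u).coeff.support).Nonempty :=
      Finsupp.support_nonempty_iff.2 (mt AddMonoidAlgebra.coeff_eq_zero.1 hu)
    exact ⟨γ, Finset.mem_union_left _
      (Finset.mem_biUnion.2 ⟨u, Finsupp.mem_support_iff.2 hu, hγ⟩)⟩
  set μ : Γ := E.max' hEne with hμdef
  have hlle : ∀ u, ∀ γ ∈ (l u).coeff.support, γ ≤ μ := by
    intro u γ hγ
    by_cases hu : u ∈ l.support
    · exact Finset.le_max' _ _ (Finset.mem_union_left _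
        (Finset.mem_biUnion.2 ⟨u, hu, hγ⟩))
    · rw [Finsupp.notMem_support_iff.1 hu] at hγ
      exact absurd hγ (by simp)
  have hble : ∀ z ∈ b.support, ∀ γ ∈ (b z).coeff.support, γ ≤ μ := fun z hz γ hγ =>
    Finset.le_max' _ _ (Finset.mem_union_right _ (Finset.mem_biUnion.2 ⟨z, hz, hγ⟩))
  have hcoeff : ∀ w : W, (b w).coeff μ =
      ∑ u ∈ l.support, (if (d0 * (u : W)) = w then (l u).coeff μ else 0) := by
    intro w
    have h1' : (d.bT.repr y w).coeff μ = (∑ u ∈ l.support,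
        l u * ((if (d0 * (u : W)) = w then 1 else 0) + d.bT.repr (h0 u) w)).coeff μ :=
      congrArg (fun a : A Γ => a.coeff μ) (hf w)
    have h2' : (d.bT.repr y w).coeff μ = (b w + ∑ z ∈ b.support,
        b z * d.bT.repr (d.bC z - d.bT z) w).coeff μ :=
      congrArg (fun a : A Γ => a.coeff μ) (hg w)
    rw [AddMonoidAlgebra.coeff_add, Finsupp.add_apply] at h2'
    rw [AddMonoidAlgebra.coeff_sum, Finset.sum_apply'] at h1'
    rw [AddMonoidAlgebra.coeff_sum, Finset.sum_apply'] at h2'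
    have e1 : ∀ u ∈ l.support,
        (l u * ((if (d0 * (u : W)) = w then 1 else 0) + d.bT.repr (h0 u) w)).coeff μ
          = (if (d0 * (u : W)) = w then (l u).coeff μ else 0) := by
      intro u _
      rw [mul_add, AddMonoidAlgebra.coeff_add, Finsupp.add_apply]
      have hz : (l u * d.bT.repr (h0 u) w).coeff μ = 0 :=
        KLHelper.mul_coeff_eq_zero _ _ μ μ (hlle u) (hh0 u w) le_rfl
      rw [hz, add_zero, mul_ite, mul_one, mul_zero]
      by_cases hc : (d0 * (u : W)) = w
      · rw [if_pos hc, if_pos hc]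
      · rw [if_neg hc, if_neg hc, AddMonoidAlgebra.coeff_zero, Finsupp.coe_zero, Pi.zero_apply]
    have e2 : ∀ z ∈ b.support, (b z * d.bT.repr (d.bC z - d.bT z) w).coeff μ = 0 :=
      fun z hz => KLHelper.mul_coeff_eq_zero _ _ μ μ (hble z hz)
        (d.C_mod z w) le_rfl
    rw [Finset.sum_congr rfl e1] at h1'
    rw [Finset.sum_congr rfl e2, Finset.sum_const_zero, add_zero] at h2'
    rw [← h2', h1']
  by_cases hA : ∃ u ∈ l.support, (l u).coeff μ ≠ 0
  · obtain ⟨u0, hu0, hu0ne⟩ := hA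
    have hwc : (d0 * (u0 : W)) ∈ c := by
      have h' : (d0 * (u0 : W)) ∈ ⋃ d1 ∈ cd.D,
          {w : W | ∃ b ∈ cd.Bd d1, ∃ u ∈ cd.Ud d1, w = b * d1 * u} :=
        Set.mem_iUnion.2 ⟨d0, Set.mem_iUnion.2 ⟨hd0,
          ⟨1, cd.one_mem_B d0 hd0, (u0 : W), u0.2, by rw [one_mul]⟩⟩⟩
      exact Set.le_iff_subset.mp (le_of_eq cd.c_eq.symm) h'
    have hbw : b (d0 * (u0 : W)) = 0 := by
      by_contra h
      exact (hbsupp _ (Finsupp.mem_support_iff.2 h)).1 hwc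
    have := hcoeff (d0 * (u0 : W))
    rw [hbw] at this
    rw [Finset.sum_congr rfl (fun u (hu : u ∈ l.support) => (by
      by_cases hc : u = u0
      · subst hc; rw [if_pos rfl, if_pos rfl]
      · rw [if_neg (fun hcc => hc (Subtype.coe_injective (mul_left_cancel hcc))),
          if_neg hc]
      : (if (d0 * (u : W)) = d0 * (u0 : W) then (l u).coeff μ else 0)
        = if u = u0 then (l u).coeff μ else 0))] at this
    rw [Finset.sum_ite_eq' l.support u0 (fun u => (l u).coeff μ), if_pos hu0] at this
    rw [AddMonoidAlgebra.coeff_zero, Finsupp.coe_zero, Pi.zero_apply] at this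
    exact hu0ne this.symm
  · push_neg at hA
    have hμE : μ ∈ E := E.max'_mem hEne
    have hμb : μ ∈ b.support.biUnion fun z => (b z).coeff.support := by
      rcases Finset.mem_union.1 hμE with h | h
      · obtain ⟨u, hu, hγ⟩ := Finset.mem_biUnion.1 h
        exact absurd (hA u hu) (Finsupp.mem_support_iff.1 hγ)
      · exact h
    obtain ⟨z0, hz0, hz0μ⟩ := Finset.mem_biUnion.1 hμb
    have hz0ne : (b z0).coeff μ ≠ 0 := Finsupp.mem_support_iff.1 hz0μ
    have := hcoeff z0
    rw [Finset.sum_congr rfl (fun u (hu : u ∈ l.support) => (by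
      rw [hA u hu, ite_self]
      : (if (d0 * (u : W)) = z0 then (l u).coeff μ else 0) = 0))] at this
    rw [Finset.sum_const_zero] at this
    exact hz0ne this
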